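/- Let M = ℤ^n with n ≥ 2, r > n − 2, a = e_1 + ... + e_{n−1} + r·e_n, and Q = Cone(e_1,...,e_{n−1}, a). Then the set S_Q ∩ M = { Σ_{i<n} α_i e_i + α_n a : 0 ≤ α_i < 1 } ∩ ℤ^n equals {0, a_1,...,a_{r−1}}, where a_i = e_1 + ... + e_{n−1} + i·e_n, and the constant Γ_Q equals n − 2 − (n−2)/r. -/

import Mathlib

open Finset

noncomputable section

/-- Cast an integer vector to a real vector. -/
def castZ {n : ℕ} (u : Fin n → ℤ) : Fin n → ℝ := fun j => (u j : ℝ)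

/-- Membership in the cone spanned by the vectors `w`. -/
def inCone {n m : ℕ} (w : Fin m → (Fin n → ℝ)) (x : Fin n → ℝ) : Prop :=
  ∃ a : Fin m → ℝ, (∀ i, 0 ≤ a i) ∧ x = ∑ i, a i • w i

/-- The set of total weights of nonnegative representations of `x` in terms of `w`. -/
def weightSet {n m : ℕ} (w : Fin m → (Fin n → ℝ)) (x : Fin n → ℝ) : Set ℝ :=
  { t | ∃ a : Fin m → ℝ, (∀ i, 0 ≤ a i) ∧ x = ∑ i, a i • w i ∧ t = ∑ i, a i }

/-- The maximum weight function `W`. -/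
def maxWeight {n m : ℕ} (w : Fin m → (Fin n → ℝ)) (x : Fin n → ℝ) : ℝ :=
  sSup (weightSet w x)

/-- A lattice vector is primitive. -/
def Primitive {n : ℕ} (v : Fin n → ℤ) : Prop :=
  v ≠ 0 ∧ ∀ (z : ℤ) (q : Fin n → ℤ), 0 < z → v = z • q → z = 1

/-- Lattice points of the cone. -/
def latticeInCone {n m : ℕ} (w : Fin m → (Fin n → ℤ)) (u : Fin n → ℤ) : Prop :=
  inCone (fun i => castZ (w i)) (castZ u)

/-- `χ^u ∈ m_Q^k` : `u` is a sum of `k` nonzero lattice points of the cone plus a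
lattice point of the cone. -/
def inPowM {n m : ℕ} (w : Fin m → (Fin n → ℤ)) (u : Fin n → ℤ) (k : ℕ) : Prop :=
  ∃ v : Fin k → (Fin n → ℤ), (∀ i, latticeInCone w (v i) ∧ v i ≠ 0) ∧
    latticeInCone w (u - ∑ i, v i)

/-- `k_u` : the largest `k` such that `χ^u ∈ m_Q^k`. -/
def kU {n m : ℕ} (w : Fin m → (Fin n → ℤ)) (u : Fin n → ℤ) : ℕ :=
  sSup {k | inPowM w u k}

/-- Lattice points of the fundamental box `S_Q`. -/
def inBox {n m : ℕ} (w : Fin m → (Fin n → ℤ)) (u : Fin n → ℤ) : Prop :=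
  ∃ a : Fin m → ℝ, (∀ i, 0 ≤ a i ∧ a i < 1) ∧ castZ u = ∑ i, a i • castZ (w i)

/-- The constant `Γ_Q`. -/
def gammaQ {n m : ℕ} (w : Fin m → (Fin n → ℤ)) : ℝ :=
  sSup { x | ∃ u, inBox w u ∧
    x = maxWeight (fun i => castZ (w i)) (castZ u) - (kU w u : ℝ) }

end

/-- The ray generators of the cone `Q = Cone(e₁, ..., e_{n-1}, a)` from the sharpness
example, where `a = e₁ + ⋯ + e_{n−1} + r·eₙ`. -/
def exGens (n : ℕ) (r : ℕ) : Fin n → (Fin n → ℤ) :=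
  fun i => if (i : ℕ) < n - 1 then Pi.single i 1
           else fun j => if (j : ℕ) = n - 1 then (r : ℤ) else 1

/-- The lattice point `aᵢ = e₁ + ⋯ + e_{n−1} + i·eₙ`. -/
def exA (n : ℕ) (i : ℕ) : Fin n → ℤ := fun j => if (j : ℕ) = n - 1 then (i : ℤ) else 1

namespace ExAux

variable {m r : ℕ}

/-- the last index -/
abbrev L (m : ℕ) : Fin (m+2) := Fin.last (m+1)

lemma coe_L : ((L m : Fin (m+2)) : ℕ) = m + 1 := rfl

lemma gens_apply (r : ℕ) (i j : Fin (m+2)) :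
    exGens (m+2) r i j = if i = L m then (if j = L m then (r:ℤ) else 1)
      else (if j = i then 1 else 0) := by
  unfold exGens
  have hsub : m + 2 - 1 = m + 1 := rfl
  rw [hsub]
  by_cases hi : i = L m
  · subst hi
    rw [if_neg (by simp [L, Fin.last]), if_pos rfl]
    by_cases hj : j = L m
    · rw [if_pos hj, if_pos (by simp [hj, L, Fin.last])]
    · rw [if_neg hj, if_neg (by simpa [Fin.ext_iff, L, Fin.last] using hj)]
  · have hlt : (i:ℕ) < m + 1 := by
      have h1 := i.isLt
      have h2 : (i:ℕ) ≠ m + 1 := fun h => hi (Fin.ext h)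
      omega
    rw [if_pos hlt, if_neg hi, Pi.single_apply]

lemma sum_apply (a : Fin (m+2) → ℝ) (j : Fin (m+2)) :
    (∑ i, a i • castZ (exGens (m+2) r i)) j
      = if j = L m then r * a (L m) else a j + a (L m) := by
  have hterm : ∀ i : Fin (m+2), (a i • castZ (exGens (m+2) r i)) j
      = a i * ((exGens (m+2) r i j : ℤ) : ℝ) := fun i => rfl
  rw [Finset.sum_apply]
  simp only [hterm]
  rw [← Finset.add_sum_erase _ _ (Finset.mem_univ (L m))]
  have h1 : a (L m) * ((exGens (m+2) r (L m) j : ℤ) : ℝ)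
      = a (L m) * (if j = L m then (r:ℝ) else 1) := by
    rw [gens_apply, if_pos rfl]
    by_cases hj : j = L m <;> simp [hj]
  have h2 : ∑ i ∈ Finset.univ.erase (L m), a i * ((exGens (m+2) r i j : ℤ) : ℝ)
      = ∑ i ∈ Finset.univ.erase (L m), (if j = i then a i else 0) := by
    apply Finset.sum_congr rfl
    intro i hi
    rw [gens_apply, if_neg (Finset.ne_of_mem_erase hi)]
    by_cases h : j = i <;> simp [h]
  rw [h1, h2]
  by_cases hj : j = L m
  · rw [if_pos hj, if_pos hj, Finset.sum_eq_zero, add_zero]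
    · ring
    · intro i hi
      exact if_neg (by rw [hj]; exact fun h => (Finset.ne_of_mem_erase hi) h.symm)
  · rw [if_neg hj, if_neg hj, Finset.sum_ite_eq]
    rw [if_pos (Finset.mem_erase.mpr ⟨hj, Finset.mem_univ j⟩)]
    ring


/-- the unique coefficients of `x` w.r.t. the generators -/
noncomputable def coeff (m r : ℕ) (x : Fin (m+2) → ℝ) : Fin (m+2) → ℝ :=
  fun i => if i = L m then x (L m) / r else x i - x (L m) / r

lemma sum_coeff (hr : 0 < r) (x : Fin (m+2) → ℝ) :
    ∑ i, coeff m r x i • castZ (exGens (m+2) r i) = x := by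
  funext j
  rw [sum_apply]
  have hrne : (r:ℝ) ≠ 0 := Nat.cast_ne_zero.mpr hr.ne'
  by_cases hj : j = L m
  · rw [if_pos hj, hj]
    unfold coeff
    rw [if_pos rfl]
    field_simp
  · rw [if_neg hj]
    unfold coeff
    rw [if_neg hj, if_pos rfl]
    ring

lemma repr_eq (hr : 0 < r) {a x : Fin (m+2) → ℝ}
    (h : x = ∑ i, a i • castZ (exGens (m+2) r i)) : a = coeff m r x := by
  have hrne : (r:ℝ) ≠ 0 := Nat.cast_ne_zero.mpr hr.ne'
  have hx : ∀ j, x j = if j = L m then r * a (L m) else a j + a (L m) := by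
    intro j; rw [h, sum_apply]
  have hL : a (L m) = x (L m) / r := by
    have := hx (L m); rw [if_pos rfl] at this
    field_simp [this]
    rw [this]; ring
  funext j
  unfold coeff
  by_cases hj : j = L m
  · rw [if_pos hj, hj, hL]
  · rw [if_neg hj]
    have := hx j; rw [if_neg hj] at this
    rw [this, hL]; ring

lemma inCone_iff (hr : 0 < r) (x : Fin (m+2) → ℝ) :
    inCone (fun i => castZ (exGens (m+2) r i)) x ↔ ∀ i, 0 ≤ coeff m r x i := by
  constructor
  · rintro ⟨a, ha, hx⟩
    rw [repr_eq hr hx] at ha; exact ha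
  · intro h
    exact ⟨coeff m r x, h, (sum_coeff hr x).symm⟩

lemma inBox_iff (hr : 0 < r) (u : Fin (m+2) → ℤ) :
    inBox (exGens (m+2) r) u ↔ ∀ i, 0 ≤ coeff m r (castZ u) i ∧ coeff m r (castZ u) i < 1 := by
  constructor
  · rintro ⟨a, ha, hx⟩
    rw [repr_eq hr hx] at ha; exact ha
  · intro h
    exact ⟨coeff m r (castZ u), h, (sum_coeff hr (castZ u)).symm⟩

lemma weightSet_eq (hr : 0 < r) {x : Fin (m+2) → ℝ}
    (hx : inCone (fun i => castZ (exGens (m+2) r i)) x) :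
    weightSet (fun i => castZ (exGens (m+2) r i)) x = {∑ i, coeff m r x i} := by
  ext t
  simp only [weightSet, Set.mem_setOf_eq, Set.mem_singleton_iff]
  constructor
  · rintro ⟨a, _, hxa, ht⟩
    rw [ht, repr_eq hr hxa]
  · rintro rfl
    exact ⟨coeff m r x, (inCone_iff hr x).mp hx, (sum_coeff hr x).symm, rfl⟩

lemma maxWeight_eq (hr : 0 < r) {x : Fin (m+2) → ℝ}
    (hx : inCone (fun i => castZ (exGens (m+2) r i)) x) :
    maxWeight (fun i => castZ (exGens (m+2) r i)) x = ∑ i, coeff m r x i := by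
  rw [maxWeight, weightSet_eq hr hx, csSup_singleton]


/-- Integer characterization of lattice cone points. -/
def LC (m r : ℕ) (u : Fin (m+2) → ℤ) : Prop :=
  0 ≤ u (L m) ∧ ∀ j, j ≠ L m → u (L m) ≤ r * u j

lemma latticeInCone_iff (hr : 0 < r) (u : Fin (m+2) → ℤ) :
    latticeInCone (exGens (m+2) r) u ↔ LC m r u := by
  have hrpos : (0:ℝ) < r := Nat.cast_pos.mpr hr
  rw [latticeInCone, inCone_iff hr]
  constructor
  · intro h
    constructor
    · have h0 := h (L m)
      rw [coeff, if_pos rfl] at h0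
      simp only [castZ] at h0
      have h1 : (0:ℝ) ≤ (u (L m) : ℝ) := by
        rcases div_nonneg_iff.mp h0 with ⟨h1, _⟩ | ⟨_, h2⟩
        · exact h1
        · nlinarith
      exact_mod_cast h1
    · intro j hj
      have h0 := h j
      rw [coeff, if_neg hj] at h0
      simp only [castZ] at h0
      have h2 : (u (L m) : ℝ) ≤ r * u j := by
        rw [sub_nonneg, div_le_iff₀ hrpos] at h0
        nlinarith [h0]
      exact_mod_cast h2
  · rintro ⟨h1, h2⟩ i
    rw [coeff]
    by_cases hi : i = L m
    · rw [if_pos hi]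
      apply div_nonneg _ hrpos.le
      simp only [castZ, hi]
      exact_mod_cast h1
    · rw [if_neg hi]
      have h3 : (u (L m) : ℝ) ≤ r * u i := by exact_mod_cast h2 i hi
      simp only [castZ]
      rw [sub_nonneg, div_le_iff₀ hrpos]
      linarith

lemma LC_nonneg (hr : 0 < r) {u : Fin (m+2) → ℤ} (h : LC m r u) : ∀ j, 0 ≤ u j := by
  intro j
  by_cases hj : j = L m
  · rw [hj]; exact h.1
  · have := h.2 j hj
    nlinarith [h.1, Int.natCast_pos.mpr hr]

lemma LC_zero : LC m r 0 := ⟨le_refl 0, fun j _ => by simp⟩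

lemma LC_add {u v : Fin (m+2) → ℤ} (hu : LC m r u) (hv : LC m r v) : LC m r (u + v) := by
  refine ⟨add_nonneg hu.1 hv.1, fun j hj => ?_⟩
  have := hu.2 j hj
  have := hv.2 j hj
  simp only [Pi.add_apply]
  linarith [mul_add (r:ℤ) (u j) (v j)]

lemma LC_sum {k : ℕ} (f : Fin k → (Fin (m+2) → ℤ)) (s : Finset (Fin k))
    (h : ∀ i ∈ s, LC m r (f i)) : LC m r (∑ i ∈ s, f i) := by
  classical
  induction s using Finset.induction_on with
  | empty => simpa using LC_zero
  | insert _ _ hx ih =>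
    rw [Finset.sum_insert hx]
    exact LC_add (h _ (Finset.mem_insert_self _ _))
      (ih fun i hi => h i (Finset.mem_insert_of_mem hi))

lemma exA_LC (hr : 0 < r) {i : ℕ} (hi : i ≤ r) : LC m r (exA (m+2) i) := by
  constructor
  · show (0:ℤ) ≤ if ((L m : Fin (m+2)):ℕ) = m + 2 - 1 then (i:ℤ) else 1
    rw [if_pos (show ((L m : Fin (m+2)):ℕ) = m + 2 - 1 from rfl)]
    exact_mod_cast Nat.zero_le i
  · intro j hj
    show (if ((L m : Fin (m+2)):ℕ) = m + 2 - 1 then (i:ℤ) else 1) ≤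
      r * (if (j:ℕ) = m + 2 - 1 then (i:ℤ) else 1)
    rw [if_pos (show ((L m : Fin (m+2)):ℕ) = m + 2 - 1 from rfl),
      if_neg (show ¬ ((j:ℕ) = m + 2 - 1) from fun h => hj (Fin.ext h))]
    simpa using (by exact_mod_cast hi : (i:ℤ) ≤ r)

lemma exA_ne_zero (i : ℕ) : exA (m+2) i ≠ 0 := by
  intro h
  have := congrFun h ⟨0, by omega⟩
  simp only [exA, Pi.zero_apply] at this
  rw [if_neg (by omega)] at this
  exact one_ne_zero this


lemma exA_apply (i : ℕ) (j : Fin (m+2)) :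
    exA (m+2) i j = if j = L m then (i:ℤ) else 1 := by
  show (if (j:ℕ) = m + 2 - 1 then (i:ℤ) else 1) = _
  by_cases hj : j = L m
  · rw [if_pos (show (j:ℕ) = m + 2 - 1 by rw [hj]; rfl), if_pos hj]
  · rw [if_neg (show ¬ ((j:ℕ) = m + 2 - 1) from fun h => hj (Fin.ext h)), if_neg hj]

lemma castZ_exA (i : ℕ) (j : Fin (m+2)) :
    castZ (exA (m+2) i) j = if j = L m then (i:ℝ) else 1 := by
  rw [castZ, exA_apply]
  by_cases hj : j = L m <;> simp [hj]

lemma coeff_exA (i : ℕ) (j : Fin (m+2)) :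
    coeff m r (castZ (exA (m+2) i)) j = if j = L m then (i:ℝ)/r else 1 - (i:ℝ)/r := by
  rw [coeff, castZ_exA, castZ_exA, if_pos rfl]
  by_cases hj : j = L m <;> simp [hj]

lemma sum_coeff_exA (i : ℕ) :
    ∑ j, coeff m r (castZ (exA (m+2) i)) j = (i:ℝ)/r + (m+1) * (1 - (i:ℝ)/r) := by
  rw [← Finset.add_sum_erase _ _ (Finset.mem_univ (L m)), coeff_exA, if_pos rfl]
  congr 1
  rw [Finset.sum_congr rfl (fun j hj => by
    rw [coeff_exA, if_neg (Finset.ne_of_mem_erase hj)]), Finset.sum_const, nsmul_eq_mul]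
  congr 1
  rw [Finset.card_erase_of_mem (Finset.mem_univ _), Finset.card_univ, Fintype.card_fin]
  push_cast; ring

lemma castZ_zero : castZ (0 : Fin (m+2) → ℤ) = 0 := by
  funext j; simp [castZ]

lemma coeff_zero : coeff m r (0 : Fin (m+2) → ℝ) = 0 := by
  funext j
  rw [coeff]
  by_cases hj : j = L m <;> simp [hj]

/-- Box classification. -/
lemma box_class (hr : 0 < r) (u : Fin (m+2) → ℤ) :
    inBox (exGens (m+2) r) u ↔
      (u = 0 ∨ ∃ i : ℕ, 1 ≤ i ∧ i ≤ r - 1 ∧ u = exA (m+2) i) := by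
  have hrpos : (0:ℝ) < r := Nat.cast_pos.mpr hr
  rw [inBox_iff hr]
  constructor
  · intro h
    obtain ⟨hL0, hL1⟩ := h (L m)
    rw [coeff, if_pos rfl] at hL0 hL1
    simp only [castZ] at hL0 hL1
    have huL0 : (0:ℤ) ≤ u (L m) := by
      rcases div_nonneg_iff.mp hL0 with ⟨h1, _⟩ | ⟨_, h2⟩
      · exact_mod_cast h1
      · nlinarith
    have huLr : u (L m) < r := by
      have := (div_lt_one hrpos).mp hL1
      exact_mod_cast this
    by_cases h0 : u (L m) = 0
    · left
      funext j
      by_cases hj : j = L m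
      · rw [hj, h0]; rfl
      · obtain ⟨hj0, hj1⟩ := h j
        rw [coeff, if_neg hj] at hj0 hj1
        simp only [castZ, h0] at hj0 hj1
        rw [Int.cast_zero, zero_div, sub_zero] at hj0 hj1
        have e0 : (0:ℤ) ≤ u j := by exact_mod_cast hj0
        have e1 : u j < 1 := by exact_mod_cast hj1
        show u j = (0 : Fin (m+2) → ℤ) j
        simp only [Pi.zero_apply]
        omega
    · right
      refine ⟨(u (L m)).toNat, by omega, by omega, ?_⟩
      have htn : ((u (L m)).toNat : ℤ) = u (L m) := Int.toNat_of_nonneg huL0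
      funext j
      rw [exA_apply, htn]
      by_cases hj : j = L m
      · rw [if_pos hj, hj]
      · rw [if_neg hj]
        obtain ⟨hj0, hj1⟩ := h j
        rw [coeff, if_neg hj] at hj0 hj1
        simp only [castZ] at hj0 hj1
        have hq0 : (0:ℝ) < (u (L m) : ℝ) / r :=
          div_pos (by exact_mod_cast lt_of_le_of_ne huL0 (Ne.symm h0)) hrpos
        have hq1 : (u (L m) : ℝ) / r < 1 := (div_lt_one hrpos).mpr (by exact_mod_cast huLr)
        have e0 : (0:ℝ) < (u j : ℝ) := by linarith
        have e1 : (u j : ℝ) < 2 := by linarith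
        have f0 : (0:ℤ) < u j := by exact_mod_cast e0
        have f1 : u j < 2 := by exact_mod_cast e1
        omega
  · rintro (rfl | ⟨i, hi1, hi2, rfl⟩)
    · intro j
      rw [castZ_zero, coeff_zero]
      norm_num
    · intro j
      rw [coeff_exA]
      have hir : (i:ℝ) < r := by
        have : i < r := by omega
        exact_mod_cast this
      have hi1' : (1:ℝ) ≤ (i:ℝ) := by exact_mod_cast hi1
      by_cases hj : j = L m
      · rw [if_pos hj]
        constructor
        · positivity
        · rw [div_lt_one hrpos]; exact hir
      · rw [if_neg hj]
        constructor
        · rw [sub_nonneg, div_le_one hrpos]; exact hir.le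
        · have : (0:ℝ) < (i:ℝ)/r := by positivity
          linarith


lemma kU_zero (hr : 0 < r) : kU (exGens (m+2) r) (0 : Fin (m+2) → ℤ) = 0 := by
  have hmem : (0:ℕ) ∈ {k | inPowM (exGens (m+2) r) (0 : Fin (m+2) → ℤ) k} := by
    refine ⟨Fin.elim0, fun i => i.elim0, ?_⟩
    rw [show (∑ i : Fin 0, Fin.elim0 i : Fin (m+2) → ℤ) = 0 by simp]
    rw [sub_zero]
    exact (latticeInCone_iff hr 0).mpr LC_zero
  have hub : ∀ k ∈ {k | inPowM (exGens (m+2) r) (0 : Fin (m+2) → ℤ) k}, k ≤ 0 := by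
    intro k hk
    by_contra hk0
    push_neg at hk0
    obtain ⟨v, hv, hz⟩ := hk
    have hLC : ∀ i, LC m r (v i) := fun i => (latticeInCone_iff hr _).mp (hv i).1
    have hs : LC m r (∑ i, v i) := LC_sum v Finset.univ (fun i _ => hLC i)
    have hz' : LC m r (0 - ∑ i, v i) := (latticeInCone_iff hr _).mp hz
    have hcoord : ∀ j, (∑ i, v i) j = 0 := by
      intro j
      have h1 := LC_nonneg hr hs j
      have h2 := LC_nonneg hr hz' j
      simp only [Pi.sub_apply, Pi.zero_apply, zero_sub] at h2
      omega
    have i0 : Fin k := ⟨0, hk0⟩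
    apply (hv i0).2
    funext j
    have hsum : ∑ i, (v i) j = 0 := by
      have := hcoord j
      rwa [Finset.sum_apply] at this
    have := (Finset.sum_eq_zero_iff_of_nonneg
      (fun i _ => LC_nonneg hr (hLC i) j)).mp hsum i0 (Finset.mem_univ i0)
    simpa using this
  exact IsGreatest.csSup_eq ⟨hmem, hub⟩


/-- Asymmetric splitting contradiction: the first part has zero last coordinate. -/
lemma no_split_aux (hr : 0 < r) {i : ℕ} (h1 : 1 ≤ i)
    {p q s : Fin (m+2) → ℤ} (hp : LC m r p) (hq : LC m r q) (hs : LC m r s)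
    (hp0 : p ≠ 0) (hpL : p (L m) = 0)
    (heq : ∀ j, exA (m+2) i j = p j + q j + s j) : False := by
  -- find a nonzero coordinate of p, necessarily ≠ L
  have hpnz : ∃ j, p j ≠ 0 := by
    by_contra hc
    push_neg at hc
    exact hp0 (funext fun j => hc j)
  obtain ⟨j0, hj0⟩ := hpnz
  have hj0L : j0 ≠ L m := fun h => hj0 (h ▸ hpL)
  have hp1 : 1 ≤ p j0 := lt_of_le_of_ne (LC_nonneg hr hp j0) (Ne.symm hj0)
  have hEj0 := heq j0
  rw [exA_apply, if_neg hj0L] at hEj0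
  have hq0 : q j0 = 0 := by
    have := LC_nonneg hr hq j0
    have := LC_nonneg hr hs j0
    omega
  have hs0 : s j0 = 0 := by
    have := LC_nonneg hr hq j0
    have := LC_nonneg hr hs j0
    omega
  have hqL : q (L m) = 0 := by
    have := hq.2 j0 hj0L
    rw [hq0, mul_zero] at this
    exact le_antisymm this hq.1
  have hsL : s (L m) = 0 := by
    have := hs.2 j0 hj0L
    rw [hs0, mul_zero] at this
    exact le_antisymm this hs.1
  have hEL := heq (L m)
  rw [exA_apply, if_pos rfl, hpL, hqL, hsL] at hEL
  have : (i:ℤ) = 0 := by omega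
  omega

lemma no_split (hr : 0 < r) {i : ℕ} (h1 : 1 ≤ i)
    {p q s : Fin (m+2) → ℤ} (hp : LC m r p) (hq : LC m r q) (hs : LC m r s)
    (hp0 : p ≠ 0) (hq0 : q ≠ 0)
    (heq : ∀ j, exA (m+2) i j = p j + q j + s j) : False := by
  by_cases hpL : p (L m) = 0
  · exact no_split_aux hr h1 hp hq hs hp0 hpL heq
  by_cases hqL : q (L m) = 0
  · exact no_split_aux hr h1 hq hp hs hq0 hqL (fun j => by rw [heq j]; ring)
  have hpL1 : 1 ≤ p (L m) := lt_of_le_of_ne hp.1 (Ne.symm hpL)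
  have hqL1 : 1 ≤ q (L m) := lt_of_le_of_ne hq.1 (Ne.symm hqL)
  set j0 : Fin (m+2) := ⟨0, by omega⟩ with hj0def
  have hj0L : j0 ≠ L m := by
    intro h
    have : (0:ℕ) = m + 1 := congrArg Fin.val h
    omega
  have hrZ : (0:ℤ) < r := by exact_mod_cast hr
  have hpj : 1 ≤ p j0 := by
    have h := hp.2 j0 hj0L
    rcases mul_pos_iff.mp (lt_of_lt_of_le (lt_of_lt_of_le zero_lt_one hpL1) h) with
      ⟨_, h2⟩ | ⟨h2, _⟩
    · omega
    · omega
  have hqj : 1 ≤ q j0 := by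
    have h := hq.2 j0 hj0L
    rcases mul_pos_iff.mp (lt_of_lt_of_le (lt_of_lt_of_le zero_lt_one hqL1) h) with
      ⟨_, h2⟩ | ⟨h2, _⟩
    · omega
    · omega
  have hsj := LC_nonneg hr hs j0
  have hEj0 := heq j0
  rw [exA_apply, if_neg hj0L] at hEj0
  omega


lemma kU_exA (hr : 0 < r) {i : ℕ} (h1 : 1 ≤ i) (h2 : i ≤ r - 1) :
    kU (exGens (m+2) r) (exA (m+2) i) = 1 := by
  have hmem : (1:ℕ) ∈ {k | inPowM (exGens (m+2) r) (exA (m+2) i) k} := by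
    refine ⟨fun _ => exA (m+2) i, fun _ =>
      ⟨(latticeInCone_iff hr _).mpr (exA_LC hr (by omega)), exA_ne_zero i⟩, ?_⟩
    rw [show (∑ _j : Fin 1, exA (m+2) i) = exA (m+2) i from Fin.sum_univ_one _]
    rw [sub_self]
    exact (latticeInCone_iff hr 0).mpr LC_zero
  have hub : ∀ k ∈ {k | inPowM (exGens (m+2) r) (exA (m+2) i) k}, k ≤ 1 := by
    intro k hk
    by_contra hk1
    push_neg at hk1
    obtain ⟨v, hv, hz⟩ := hk
    have hLC : ∀ a, LC m r (v a) := fun a => (latticeInCone_iff hr _).mp (hv a).1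
    set i0 : Fin k := ⟨0, by omega⟩
    set i1 : Fin k := ⟨1, by omega⟩
    have hne : i1 ≠ i0 := by
      intro h
      have : (1:ℕ) = 0 := congrArg Fin.val h
      omega
    have hsplit : ∑ a, v a = v i0 + v i1 + ∑ a ∈ (Finset.univ.erase i0).erase i1, v a := by
      rw [← Finset.add_sum_erase _ _ (Finset.mem_univ i0),
        ← Finset.add_sum_erase _ _ (Finset.mem_erase.mpr ⟨hne, Finset.mem_univ i1⟩)]
      ring
    set rest : Fin (m+2) → ℤ :=
      (exA (m+2) i - ∑ a, v a) + ∑ a ∈ (Finset.univ.erase i0).erase i1, v a with hrest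
    have hrestLC : LC m r rest :=
      LC_add ((latticeInCone_iff hr _).mp hz) (LC_sum v _ (fun a _ => hLC a))
    refine no_split hr h1 (hLC i0) (hLC i1) hrestLC (hv i0).2 (hv i1).2 (fun j => ?_)
    have : rest j = exA (m+2) i j - (v i0) j - (v i1) j := by
      rw [hrest]
      simp only [Pi.add_apply, Pi.sub_apply]
      rw [hsplit]
      simp only [Pi.add_apply]
      ring
    rw [this]
    ring
  exact IsGreatest.csSup_eq ⟨hmem, hub⟩


lemma maxWeight_zero (hr : 0 < r) :
    maxWeight (fun a => castZ (exGens (m+2) r a)) (castZ (0 : Fin (m+2) → ℤ)) = 0 := by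
  rw [castZ_zero, maxWeight_eq hr ((inCone_iff hr 0).mpr (fun a => by rw [coeff_zero]; simp)),
    Finset.sum_eq_zero (fun a _ => by rw [coeff_zero]; rfl)]

lemma maxWeight_exA (hr : 0 < r) {i : ℕ} (hi : i ≤ r) :
    maxWeight (fun a => castZ (exGens (m+2) r a)) (castZ (exA (m+2) i))
      = (i:ℝ)/r + (m+1) * (1 - (i:ℝ)/r) := by
  have hcone : inCone (fun a => castZ (exGens (m+2) r a)) (castZ (exA (m+2) i)) := by
    rw [inCone_iff hr]
    intro a
    rw [coeff_exA]
    have hrpos : (0:ℝ) < r := Nat.cast_pos.mpr hr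
    have hir : (i:ℝ) ≤ r := by exact_mod_cast hi
    by_cases ha : a = L m
    · rw [if_pos ha]; positivity
    · rw [if_neg ha, sub_nonneg, div_le_one hrpos]; exact hir
  rw [maxWeight_eq hr hcone, sum_coeff_exA]

lemma gamma_val (hr : 0 < r) :
    gammaQ (exGens (m+2) r) = (m:ℝ) - (m:ℝ)/r := by
  have hrpos : (0:ℝ) < r := Nat.cast_pos.mpr hr
  have hr1 : (1:ℝ) ≤ r := by exact_mod_cast hr
  apply IsGreatest.csSup_eq
  constructor
  · -- membership
    by_cases hr2 : r = 1
    · refine ⟨0, (box_class hr 0).mpr (Or.inl rfl), ?_⟩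
      rw [maxWeight_zero hr, kU_zero hr, hr2]
      norm_num
    · have hr2' : 2 ≤ r := by omega
      refine ⟨exA (m+2) 1, (box_class hr _).mpr (Or.inr ⟨1, le_refl 1, by omega, rfl⟩), ?_⟩
      rw [maxWeight_exA hr (by omega), kU_exA hr (le_refl 1) (by omega)]
      push_cast
      field_simp
      ring
  · -- upper bound
    rintro x ⟨u, hu, rfl⟩
    rcases (box_class hr u).mp hu with rfl | ⟨i, hi1, hi2, rfl⟩
    · rw [maxWeight_zero hr, kU_zero hr]
      have : (m:ℝ)/r ≤ m := by
        rw [div_le_iff₀ hrpos]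
        nlinarith [Nat.cast_nonneg (α := ℝ) m]
      simp only [Nat.cast_zero, sub_zero]
      linarith
    · rw [maxWeight_exA hr (by omega), kU_exA hr hi1 hi2]
      have hi1' : (1:ℝ) ≤ (i:ℝ) := by exact_mod_cast hi1
      have key : (i:ℝ)/r + (m+1) * (1 - (i:ℝ)/r) - 1 = (m:ℝ) - m * ((i:ℝ)/r) := by ring
      rw [Nat.cast_one, key]
      have : (m:ℝ)/r ≤ m * ((i:ℝ)/r) := by
        have h0 : (0:ℝ) ≤ (m:ℝ) := Nat.cast_nonneg m
        have h1 : (1:ℝ)/r ≤ (i:ℝ)/r := by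
          gcongr
        calc (m:ℝ)/r = m * ((1:ℝ)/r) := by ring
          _ ≤ m * ((i:ℝ)/r) := by nlinarith
      linarith

end ExAux

/-- In the cone `Q = Cone(e₁,...,e_{n−1}, a)` with
`a = e₁ + ⋯ + e_{n−1} + r·eₙ`, `r > n − 2`, the lattice points of the fundamental box
are exactly `0, a₁, ..., a_{r−1}`, and `Γ_Q = n − 2 − (n−2)/r`. -/
theorem example_box_and_gamma (n r : ℕ) (hn : 2 ≤ n) (hr : n - 2 < r) :
    (∀ u : Fin n → ℤ, inBox (exGens n r) u ↔
      (u = 0 ∨ ∃ i : ℕ, 1 ≤ i ∧ i ≤ r - 1 ∧ u = exA n i)) ∧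
    gammaQ (exGens n r) = (n : ℝ) - 2 - ((n : ℝ) - 2) / (r : ℝ) := by
  obtain ⟨m, rfl⟩ : ∃ m, n = m + 2 := ⟨n - 2, by omega⟩
  have hr0 : 0 < r := by omega
  refine ⟨ExAux.box_class hr0, ?_⟩
  rw [ExAux.gamma_val hr0]
  push_cast
  ring
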